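/- Let d ≥ 1, let E ⊆ ℝ^d be a finite set with at least two points, and let P_E be a 1-field on E. Then there exists a differentiable function F : ℝ^d → ℝ whose gradient ∇F is Lipschitz with constant Γ(P_E) and which satisfies F(x) = f(x) and ∇F(x) = g(x) for all x ∈ E. -/

import Mathlib

open scoped RealInnerProductSpace

/-- The affine polynomial (first order jet) `P_u(z) = f(u) + ⟪g(u), z - u⟫`. -/
noncomputable def jet {d : ℕ} (f : EuclideanSpace ℝ (Fin d) → ℝ)
    (g : EuclideanSpace ℝ (Fin d) → EuclideanSpace ℝ (Fin d))
    (u z : EuclideanSpace ℝ (Fin d)) : ℝ :=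
  f u + ⟪g u, z - u⟫

/-- `A(x,y) = |P_x(x) - P_y(x) + P_x(y) - P_y(y)| / |x - y|²`. -/
noncomputable def funA {d : ℕ} (f : EuclideanSpace ℝ (Fin d) → ℝ)
    (g : EuclideanSpace ℝ (Fin d) → EuclideanSpace ℝ (Fin d))
    (x y : EuclideanSpace ℝ (Fin d)) : ℝ :=
  |jet f g x x - jet f g y x + jet f g x y - jet f g y y| / ‖x - y‖ ^ 2

/-- `B(x,y) = ‖g(x) - g(y)‖ / |x - y|`. -/
noncomputable def funB {d : ℕ}
    (g : EuclideanSpace ℝ (Fin d) → EuclideanSpace ℝ (Fin d))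
    (x y : EuclideanSpace ℝ (Fin d)) : ℝ :=
  ‖g x - g y‖ / ‖x - y‖

/-- `Ã(x,y) = |P_x(x) - P_y(x)| / |x - y|²`. -/
noncomputable def funAtilde {d : ℕ} (f : EuclideanSpace ℝ (Fin d) → ℝ)
    (g : EuclideanSpace ℝ (Fin d) → EuclideanSpace ℝ (Fin d))
    (x y : EuclideanSpace ℝ (Fin d)) : ℝ :=
  |jet f g x x - jet f g y x| / ‖x - y‖ ^ 2

/-- `Γ(P_E)`: max over distinct pairs of `√(A² + B²) + A`. -/
noncomputable def Gamma {d : ℕ} (E : Set (EuclideanSpace ℝ (Fin d)))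
    (f : EuclideanSpace ℝ (Fin d) → ℝ)
    (g : EuclideanSpace ℝ (Fin d) → EuclideanSpace ℝ (Fin d)) : ℝ :=
  sSup {t : ℝ | ∃ x ∈ E, ∃ y ∈ E, x ≠ y ∧
    t = Real.sqrt (funA f g x y ^ 2 + funB g x y ^ 2) + funA f g x y}

/-- `Γ'(P_E)`: max over distinct pairs of `max {A, B}`. -/
noncomputable def GammaPrime {d : ℕ} (E : Set (EuclideanSpace ℝ (Fin d)))
    (f : EuclideanSpace ℝ (Fin d) → ℝ)
    (g : EuclideanSpace ℝ (Fin d) → EuclideanSpace ℝ (Fin d)) : ℝ :=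
  sSup {t : ℝ | ∃ x ∈ E, ∃ y ∈ E, x ≠ y ∧ t = max (funA f g x y) (funB g x y)}

/-- `Γ̃(P_E)`: max over distinct pairs of `max {Ã, B}`. -/
noncomputable def GammaTilde {d : ℕ} (E : Set (EuclideanSpace ℝ (Fin d)))
    (f : EuclideanSpace ℝ (Fin d) → ℝ)
    (g : EuclideanSpace ℝ (Fin d) → EuclideanSpace ℝ (Fin d)) : ℝ :=
  sSup {t : ℝ | ∃ x ∈ E, ∃ y ∈ E, x ≠ y ∧ t = max (funAtilde f g x y) (funB g x y)}


namespace Wells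
open Filter Topology
set_option maxHeartbeats 1000000

variable {H : Type*} [NormedAddCommGroup H] [InnerProductSpace ℝ H]

/-- `S(a,b) = 2(s_a - s_b) - ⟪v_a + v_b, a - b⟫`. -/
noncomputable def SD (a b : H) (sa sb : ℝ) (va vb : H) : ℝ := 2*(sa - sb) - ⟪va + vb, a - b⟫

/-- Pair condition: `‖Δv‖² + 2κ|S| ≤ κ²‖a-b‖²`. -/
def PC (κ : ℝ) (a b : H) (sa sb : ℝ) (va vb : H) : Prop :=
  ‖va - vb‖^2 + 2*κ*|SD a b sa sb va vb| ≤ κ^2 * ‖a - b‖^2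

noncomputable def VP (κ : ℝ) (z a : H) (va : H) : H := va + κ • (z - a)
noncomputable def VM (κ : ℝ) (z a : H) (va : H) : H := va - κ • (z - a)
noncomputable def QP (κ : ℝ) (z a : H) (sa : ℝ) (va : H) : ℝ := sa + ⟪va, z - a⟫ + κ/2 * ‖z - a‖^2
noncomputable def QM (κ : ℝ) (z a : H) (sa : ℝ) (va : H) : ℝ := sa + ⟪va, z - a⟫ - κ/2 * ‖z - a‖^2

lemma key_identity (κ : ℝ) (z a b : H) (sa sb : ℝ) (va vb : H) :
    4*κ*(QP κ z a sa va - QM κ z b sb vb) - ‖VP κ z a va - VM κ z b vb‖^2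
      = 2*κ*(SD a b sa sb va vb) + κ^2*‖a-b‖^2 - ‖va - vb‖^2 := by
  simp only [QP, QM, VP, VM, SD, ← real_inner_self_eq_norm_sq]
  simp only [inner_sub_left, inner_sub_right, inner_add_left, inner_add_right,
    real_inner_smul_left, real_inner_smul_right, real_inner_comm a z, real_inner_comm b z,
    real_inner_comm b a, real_inner_comm va z, real_inner_comm vb z, real_inner_comm va a,
    real_inner_comm vb a, real_inner_comm va b, real_inner_comm vb b, real_inner_comm vb va]
  ring

lemma SD_self (a : H) (s : ℝ) (v : H) : SD a a s s v v = 0 := by simp [SD]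

lemma PC_self (κ : ℝ) (a : H) (s : ℝ) (v : H) : PC κ a a s s v v := by
  simp [PC, SD_self]

lemma SD_antisymm (a b : H) (sa sb : ℝ) (va vb : H) :
    SD b a sb sa vb va = - SD a b sa sb va vb := by
  simp only [SD]
  rw [← neg_sub a b, inner_neg_right, add_comm vb va]; ring

lemma PC_symm {κ : ℝ} {a b : H} {sa sb : ℝ} {va vb : H} (h : PC κ a b sa sb va vb) :
    PC κ b a sb sa vb va := by
  unfold PC at h ⊢
  rw [SD_antisymm, abs_neg, norm_sub_rev, norm_sub_rev b a]
  exact h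

lemma pc_to_ball {κ : ℝ} (hκ0 : 0 ≤ κ) {a b : H} {sa sb : ℝ} {va vb : H}
    (h : PC κ a b sa sb va vb) (z : H) :
    ‖VP κ z a va - VM κ z b vb‖^2 ≤ 4*κ*(QP κ z a sa va - QM κ z b sb vb) := by
  have hid := key_identity κ z a b sa sb va vb
  have h1 : -|SD a b sa sb va vb| ≤ SD a b sa sb va vb := neg_abs_le _
  unfold PC at h
  nlinarith [abs_nonneg (SD a b sa sb va vb)]

lemma VP_self (κ : ℝ) (z : H) (v : H) : VP κ z z v = v := by simp [VP]
lemma VM_self (κ : ℝ) (z : H) (v : H) : VM κ z z v = v := by simp [VM]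
lemma QP_self (κ : ℝ) (z : H) (s : ℝ) (v : H) : QP κ z z s v = s := by simp [QP]
lemma QM_self (κ : ℝ) (z : H) (s : ℝ) (v : H) : QM κ z z s v = s := by simp [QM]

lemma ball_to_pc {κ : ℝ} (hκ : 0 < κ) {z a : H} {t sa : ℝ} {w va : H}
    (h1 : ‖w - VP κ z a va‖^2 ≤ 4*κ*(QP κ z a sa va - t))
    (h2 : ‖w - VM κ z a va‖^2 ≤ 4*κ*(t - QM κ z a sa va))  :
    PC κ z a t sa w va := by
  have I1 := key_identity κ z z a t sa w va
  have I2 := key_identity κ z a z sa t va w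
  rw [VP_self, QP_self] at I1
  rw [VM_self, QM_self] at I2
  rw [norm_sub_rev (VP κ z a va) (w)] at I2
  have hA := SD_antisymm z a t sa w va
  have n1 : ‖a - z‖ = ‖z - a‖ := norm_sub_rev a z
  have n2 : ‖va - w‖ = ‖w - va‖ := norm_sub_rev va w
  unfold PC
  rw [hA, n1, n2] at I2
  rcases abs_cases (SD z a t sa w va) with ⟨he, _⟩ | ⟨he, _⟩ <;> rw [he] <;> linarith [h1, h2, I1, I2]


lemma L_expand {κ : ℝ} (c : ℝ) (a w v : H) (s : ℝ) :
    c + ‖(w + s • v) - a‖^2/(4*κ) = (c + ‖w - a‖^2/(4*κ)) + (2*s*⟪w - a, v⟫ + s^2*‖v‖^2)/(4*κ) := by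
  have h : (w + s • v) - a = (w - a) + s • v := by abel
  rw [h, norm_add_sq_real, real_inner_smul_right, norm_smul]
  simp only [Real.norm_eq_abs, mul_pow, sq_abs]
  ring

lemma continuous_sup' {n : Type*} (s : Finset n) (hs : s.Nonempty) (F : n → H → ℝ)
    (hF : ∀ i, Continuous (F i)) : Continuous fun w => s.sup' hs (fun i => F i w) := by
  induction hs using Finset.Nonempty.cons_induction with
  | singleton a => simpa using hF a
  | cons a s ha hs ih =>
    have heq : ∀ w, (Finset.cons a s ha).sup' (Finset.cons_nonempty ha) (fun i => F i w)
        = max (F a w) (s.sup' hs fun i => F i w) := fun w => Finset.sup'_cons hs _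
    simp only [heq]
    exact (hF a).max ih

lemma continuous_para {κ : ℝ} (c : ℝ) (a : H) :
    Continuous fun w : H => c + ‖w - a‖^2/(4*κ) :=
  continuous_const.add (((continuous_id.sub continuous_const).norm.pow 2).div_const _)


lemma minimizer_weights [CompleteSpace H] {κ : ℝ} (hκ : 0 < κ) {n : Type*} [Fintype n] [Nonempty n]
    (a₁ a₂ : n → H) (c₁ c₂ : n → ℝ) (wm : H)
    (hmin : ∀ w : H,
      (Finset.univ.sup' Finset.univ_nonempty (fun j => c₁ j + ‖wm - a₁ j‖^2/(4*κ))) +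
      (Finset.univ.sup' Finset.univ_nonempty (fun i => c₂ i + ‖wm - a₂ i‖^2/(4*κ))) ≤
      (Finset.univ.sup' Finset.univ_nonempty (fun j => c₁ j + ‖w - a₁ j‖^2/(4*κ))) +
      (Finset.univ.sup' Finset.univ_nonempty (fun i => c₂ i + ‖w - a₂ i‖^2/(4*κ)))) :
    ∃ μ ν : n → ℝ, (∀ j, 0 ≤ μ j) ∧ (∀ i, 0 ≤ ν i) ∧ (∑ j, μ j = 1) ∧ (∑ i, ν i = 1) ∧
      (∀ j, μ j ≠ 0 → c₁ j + ‖wm - a₁ j‖^2/(4*κ) =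
        Finset.univ.sup' Finset.univ_nonempty (fun j' => c₁ j' + ‖wm - a₁ j'‖^2/(4*κ))) ∧
      (∀ i, ν i ≠ 0 → c₂ i + ‖wm - a₂ i‖^2/(4*κ) =
        Finset.univ.sup' Finset.univ_nonempty (fun i' => c₂ i' + ‖wm - a₂ i'‖^2/(4*κ))) ∧
      ((∑ j, μ j • a₁ j) + (∑ i, ν i • a₂ i) = (2:ℝ) • wm) := by
  classical
  set S₁ : ℝ := Finset.univ.sup' Finset.univ_nonempty (fun j => c₁ j + ‖wm - a₁ j‖^2/(4*κ)) with hS₁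
  set S₂ : ℝ := Finset.univ.sup' Finset.univ_nonempty (fun i => c₂ i + ‖wm - a₂ i‖^2/(4*κ)) with hS₂
  set J : Finset n := Finset.univ.filter (fun j => c₁ j + ‖wm - a₁ j‖^2/(4*κ) = S₁) with hJ
  set I : Finset n := Finset.univ.filter (fun i => c₂ i + ‖wm - a₂ i‖^2/(4*κ) = S₂) with hI
  have hJne : J.Nonempty := by
    obtain ⟨j, hjm, hj⟩ := Finset.exists_mem_eq_sup' Finset.univ_nonempty
      (fun j => c₁ j + ‖wm - a₁ j‖^2/(4*κ))
    exact ⟨j, Finset.mem_filter.2 ⟨hjm, hj.symm⟩⟩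
  have hIne : I.Nonempty := by
    obtain ⟨i, him, hi⟩ := Finset.exists_mem_eq_sup' Finset.univ_nonempty
      (fun i => c₂ i + ‖wm - a₂ i‖^2/(4*κ))
    exact ⟨i, Finset.mem_filter.2 ⟨him, hi.symm⟩⟩
  set T : Finset H := (J ×ˢ I).image (fun p => (2:ℝ) • wm - a₁ p.1 - a₂ p.2) with hT
  -- Main claim : 0 belongs to the convex hull of T
  have h0T : (0:H) ∈ convexHull ℝ (T : Set H) := by
    by_contra h0
    have hTcl : IsClosed (convexHull ℝ (T : Set H)) :=
      (T.finite_toSet.isCompact_convexHull ℝ).isClosed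
    obtain ⟨ℓ, u, hu0, hsep⟩ :=
      geometric_hahn_banach_point_closed (convex_convexHull ℝ _) hTcl h0
    rw [map_zero] at hu0
    set y := (InnerProductSpace.toDual ℝ H).symm ℓ with hy
    have hyb : ∀ p : n × n, p ∈ J ×ˢ I → u < ⟪y, (2:ℝ) • wm - a₁ p.1 - a₂ p.2⟫ := by
      intro p hp
      rw [hy, InnerProductSpace.toDual_symm_apply]
      exact hsep _ (subset_convexHull ℝ _ (Finset.mem_coe.2 (Finset.mem_image_of_mem _ hp)))
    set v : H := -y with hv
    set M₁ : ℝ := J.sup' hJne (fun j => ⟪wm - a₁ j, v⟫) with hM₁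
    set M₂ : ℝ := I.sup' hIne (fun i => ⟪wm - a₂ i, v⟫) with hM₂
    have hMsum : M₁ + M₂ ≤ -u := by
      obtain ⟨j₁, hj₁, hMj⟩ := Finset.exists_mem_eq_sup' hJne (fun j => ⟪wm - a₁ j, v⟫)
      obtain ⟨i₁, hi₁, hMi⟩ := Finset.exists_mem_eq_sup' hIne (fun i => ⟪wm - a₂ i, v⟫)
      have hkey := hyb (j₁, i₁) (Finset.mem_product.2 ⟨hj₁, hi₁⟩)
      have hsum : ⟪wm - a₁ j₁, v⟫ + ⟪wm - a₂ i₁, v⟫ = -⟪y, (2:ℝ) • wm - a₁ j₁ - a₂ i₁⟫ := by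
        rw [← inner_add_left, hv, inner_neg_right, real_inner_comm]
        congr 1
        rw [two_smul]
        abel
      rw [hM₁, hM₂, hMj, hMi, hsum]
      linarith
    set ε : ℝ := u/4 with hε
    have hεpos : 0 < ε := by positivity
    set δ : ℝ := 2*ε/(‖v‖^2+1) with hδ
    have hδpos : 0 < δ := by positivity
    -- the first family decreases
    have claim1 : ∀ j : n, ∀ᶠ s in nhdsWithin (0:ℝ) (Set.Ioi 0),
        c₁ j + ‖(wm + s • v) - a₁ j‖^2/(4*κ) ≤ S₁ + (2*s*M₁ + 2*s*ε)/(4*κ) := by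
      intro j
      by_cases hj : j ∈ J
      · filter_upwards [Ioc_mem_nhdsGT_of_mem (Set.mem_Ico.2 ⟨le_refl (0:ℝ), hδpos⟩)] with s hs
        rw [L_expand]
        have h1 : ⟪wm - a₁ j, v⟫ ≤ M₁ := by rw [hM₁]; exact Finset.le_sup' (fun j => ⟪wm - a₁ j, v⟫) hj
        have h2 : c₁ j + ‖wm - a₁ j‖^2/(4*κ) = S₁ := (Finset.mem_filter.1 hj).2
        have h3 : s^2*‖v‖^2 ≤ 2*s*ε := by
          have hs1 : 0 < s := hs.1
          have hs2 : s ≤ δ := hs.2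
          have : s * (‖v‖^2 + 1) ≤ 2*ε := by
            rw [hδ] at hs2
            have := (le_div_iff₀ (by positivity : (0:ℝ) < ‖v‖^2+1)).1 hs2
            linarith
          nlinarith [norm_nonneg v, sq_nonneg s]
        have h4 : (2*s*⟪wm - a₁ j, v⟫ + s^2*‖v‖^2)/(4*κ) ≤ (2*s*M₁ + 2*s*ε)/(4*κ) := by
          apply div_le_div_of_nonneg_right ?_ (by positivity)
          nlinarith [hs.1]
        linarith [h2, h4]
      · have hjle : c₁ j + ‖wm - a₁ j‖^2/(4*κ) ≤ S₁ := by
          rw [hS₁]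
          exact Finset.le_sup' (fun j' => c₁ j' + ‖wm - a₁ j'‖^2/(4*κ)) (Finset.mem_univ j)
        have hjne : c₁ j + ‖wm - a₁ j‖^2/(4*κ) ≠ S₁ := fun h =>
          hj (Finset.mem_filter.2 ⟨Finset.mem_univ j, h⟩)
        have hlt : c₁ j + ‖wm - a₁ j‖^2/(4*κ) < S₁ := lt_of_le_of_ne hjle hjne
        have hcont : Continuous (fun s : ℝ =>
            c₁ j + ‖(wm + s • v) - a₁ j‖^2/(4*κ) - (2*s*M₁ + 2*s*ε)/(4*κ)) := by fun_prop
        have htend : Filter.Tendsto (fun s : ℝ =>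
            c₁ j + ‖(wm + s • v) - a₁ j‖^2/(4*κ) - (2*s*M₁ + 2*s*ε)/(4*κ))
            (nhdsWithin (0:ℝ) (Set.Ioi 0)) (𝓝 (c₁ j + ‖wm - a₁ j‖^2/(4*κ))) := by
          have heval : c₁ j + ‖(wm + (0:ℝ) • v) - a₁ j‖^2/(4*κ) - (2*0*M₁ + 2*0*ε)/(4*κ)
              = c₁ j + ‖wm - a₁ j‖^2/(4*κ) := by norm_num
          exact (heval ▸ hcont.tendsto 0).mono_left nhdsWithin_le_nhds
        filter_upwards [htend.eventually_lt_const hlt] with s hs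
        linarith
    have claim2 : ∀ i : n, ∀ᶠ s in nhdsWithin (0:ℝ) (Set.Ioi 0),
        c₂ i + ‖(wm + s • v) - a₂ i‖^2/(4*κ) ≤ S₂ + (2*s*M₂ + 2*s*ε)/(4*κ) := by
      intro i
      by_cases hi : i ∈ I
      · filter_upwards [Ioc_mem_nhdsGT_of_mem (Set.mem_Ico.2 ⟨le_refl (0:ℝ), hδpos⟩)] with s hs
        rw [L_expand]
        have h1 : ⟪wm - a₂ i, v⟫ ≤ M₂ := by
          rw [hM₂]; exact Finset.le_sup' (fun i => ⟪wm - a₂ i, v⟫) hi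
        have h2 : c₂ i + ‖wm - a₂ i‖^2/(4*κ) = S₂ := (Finset.mem_filter.1 hi).2
        have h3 : s^2*‖v‖^2 ≤ 2*s*ε := by
          have hs1 : 0 < s := hs.1
          have hs2 : s ≤ δ := hs.2
          have : s * (‖v‖^2 + 1) ≤ 2*ε := by
            rw [hδ] at hs2
            have := (le_div_iff₀ (by positivity : (0:ℝ) < ‖v‖^2+1)).1 hs2
            linarith
          nlinarith [norm_nonneg v, sq_nonneg s]
        have h4 : (2*s*⟪wm - a₂ i, v⟫ + s^2*‖v‖^2)/(4*κ) ≤ (2*s*M₂ + 2*s*ε)/(4*κ) := by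
          apply div_le_div_of_nonneg_right ?_ (by positivity)
          nlinarith [hs.1]
        linarith [h2, h4]
      · have hile : c₂ i + ‖wm - a₂ i‖^2/(4*κ) ≤ S₂ := by
          rw [hS₂]
          exact Finset.le_sup' (fun i' => c₂ i' + ‖wm - a₂ i'‖^2/(4*κ)) (Finset.mem_univ i)
        have hine : c₂ i + ‖wm - a₂ i‖^2/(4*κ) ≠ S₂ := fun h =>
          hi (Finset.mem_filter.2 ⟨Finset.mem_univ i, h⟩)
        have hlt : c₂ i + ‖wm - a₂ i‖^2/(4*κ) < S₂ := lt_of_le_of_ne hile hine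
        have hcont : Continuous (fun s : ℝ =>
            c₂ i + ‖(wm + s • v) - a₂ i‖^2/(4*κ) - (2*s*M₂ + 2*s*ε)/(4*κ)) := by fun_prop
        have htend : Filter.Tendsto (fun s : ℝ =>
            c₂ i + ‖(wm + s • v) - a₂ i‖^2/(4*κ) - (2*s*M₂ + 2*s*ε)/(4*κ))
            (nhdsWithin (0:ℝ) (Set.Ioi 0)) (𝓝 (c₂ i + ‖wm - a₂ i‖^2/(4*κ))) := by
          have heval : c₂ i + ‖(wm + (0:ℝ) • v) - a₂ i‖^2/(4*κ) - (2*0*M₂ + 2*0*ε)/(4*κ)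
              = c₂ i + ‖wm - a₂ i‖^2/(4*κ) := by norm_num
          exact (heval ▸ hcont.tendsto 0).mono_left nhdsWithin_le_nhds
        filter_upwards [htend.eventually_lt_const hlt] with s hs
        linarith
    have hev : ∀ᶠ s in nhdsWithin (0:ℝ) (Set.Ioi 0), False := by
      filter_upwards [(Filter.eventually_all).2 claim1, (Filter.eventually_all).2 claim2,
        self_mem_nhdsWithin] with s h1 h2 hs
      have hs0 : (0:ℝ) < s := hs
      have hup1 : Finset.univ.sup' Finset.univ_nonempty
          (fun j => c₁ j + ‖(wm + s • v) - a₁ j‖^2/(4*κ)) ≤ S₁ + (2*s*M₁ + 2*s*ε)/(4*κ) :=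
        Finset.sup'_le _ _ (fun j _ => h1 j)
      have hup2 : Finset.univ.sup' Finset.univ_nonempty
          (fun i => c₂ i + ‖(wm + s • v) - a₂ i‖^2/(4*κ)) ≤ S₂ + (2*s*M₂ + 2*s*ε)/(4*κ) :=
        Finset.sup'_le _ _ (fun i _ => h2 i)
      have hmin' := hmin (wm + s • v)
      have hneg : (2*s*M₁ + 2*s*ε)/(4*κ) + (2*s*M₂ + 2*s*ε)/(4*κ) < 0 := by
        rw [← add_div]
        apply div_neg_of_neg_of_pos ?_ (by positivity)
        nlinarith [hMsum, hs0, hεpos, hu0]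
      linarith
    obtain ⟨s, hF⟩ := hev.exists
    exact hF
  -- extract weights
  obtain ⟨W, hW0, hW1, hWsum⟩ := Finset.mem_convexHull'.1 h0T
  have hex : ∀ y ∈ T, ∃ p : n × n, p ∈ J ×ˢ I ∧ (2:ℝ) • wm - a₁ p.1 - a₂ p.2 = y := by
    intro y hy
    obtain ⟨p, hp, hpy⟩ := Finset.mem_image.1 hy
    exact ⟨p, hp, hpy⟩
  set rep : H → n × n := fun y =>
    if h : ∃ p : n × n, p ∈ J ×ˢ I ∧ (2:ℝ) • wm - a₁ p.1 - a₂ p.2 = y then h.choose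
    else Classical.arbitrary _ with hrepdef
  have hrep1 : ∀ y ∈ T, rep y ∈ J ×ˢ I ∧ (2:ℝ) • wm - a₁ (rep y).1 - a₂ (rep y).2 = y := by
    intro y hy
    have hexy := hex y hy
    rw [hrepdef]
    simp only [dif_pos hexy]
    exact hexy.choose_spec
  set μ : n → ℝ := fun j => ∑ y ∈ T.filter (fun y => (rep y).1 = j), W y with hμdef
  set ν : n → ℝ := fun i => ∑ y ∈ T.filter (fun y => (rep y).2 = i), W y with hνdef
  refine ⟨μ, ν, ?_, ?_, ?_, ?_, ?_, ?_, ?_⟩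
  · exact fun j => Finset.sum_nonneg fun y hy => hW0 y (Finset.mem_filter.1 hy).1
  · exact fun i => Finset.sum_nonneg fun y hy => hW0 y (Finset.mem_filter.1 hy).1
  · rw [← hW1]
    exact Finset.sum_fiberwise_of_maps_to (fun y _ => Finset.mem_univ _) W
  · rw [← hW1]
    exact Finset.sum_fiberwise_of_maps_to (fun y _ => Finset.mem_univ _) W
  · intro j hμj
    obtain ⟨y, hyf, -⟩ := Finset.exists_ne_zero_of_sum_ne_zero hμj
    obtain ⟨hyT, hyj⟩ := Finset.mem_filter.1 hyf
    have hJmem : (rep y).1 ∈ J := (Finset.mem_product.1 (hrep1 y hyT).1).1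
    rw [hyj] at hJmem
    exact (Finset.mem_filter.1 hJmem).2
  · intro i hνi
    obtain ⟨y, hyf, -⟩ := Finset.exists_ne_zero_of_sum_ne_zero hνi
    obtain ⟨hyT, hyi⟩ := Finset.mem_filter.1 hyf
    have hImem : (rep y).2 ∈ I := (Finset.mem_product.1 (hrep1 y hyT).1).2
    rw [hyi] at hImem
    exact (Finset.mem_filter.1 hImem).2
  · have e₁ : ∑ j, μ j • a₁ j = ∑ y ∈ T, W y • a₁ ((rep y).1) := by
      rw [← Finset.sum_fiberwise_of_maps_to (fun y _ => Finset.mem_univ ((rep y).1))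
        (fun y => W y • a₁ ((rep y).1))]
      refine Finset.sum_congr rfl fun j _ => ?_
      rw [hμdef]
      rw [Finset.sum_smul]
      refine Finset.sum_congr rfl fun y hy => ?_
      rw [(Finset.mem_filter.1 hy).2]
    have e₂ : ∑ i, ν i • a₂ i = ∑ y ∈ T, W y • a₂ ((rep y).2) := by
      rw [← Finset.sum_fiberwise_of_maps_to (fun y _ => Finset.mem_univ ((rep y).2))
        (fun y => W y • a₂ ((rep y).2))]
      refine Finset.sum_congr rfl fun i _ => ?_
      rw [hνdef]
      rw [Finset.sum_smul]
      refine Finset.sum_congr rfl fun y hy => ?_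
      rw [(Finset.mem_filter.1 hy).2]
    rw [e₁, e₂, ← Finset.sum_add_distrib]
    have hterm : ∀ y ∈ T, W y • a₁ ((rep y).1) + W y • a₂ ((rep y).2)
        = W y • ((2:ℝ) • wm) - W y • y := by
      intro y hy
      rw [← smul_add, ← smul_sub]
      congr 1
      have h := (hrep1 y hy).2
      conv_rhs => rw [← h]
      abel
    rw [Finset.sum_congr rfl hterm, Finset.sum_sub_distrib, ← Finset.sum_smul, hW1, hWsum,
      one_smul, sub_zero]


lemma core_finite [FiniteDimensional ℝ H] {κ : ℝ} (hκ : 0 < κ) {n : Type*} [Fintype n]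
    [Nonempty n] (vp vm : n → H) (qp qm : n → ℝ)
    (hpair : ∀ i j, ‖vp i - vm j‖^2 ≤ 4*κ*(qp i - qm j)) :
    ∃ w t, ∀ i, ‖w - vp i‖^2 ≤ 4*κ*(qp i - t) ∧ ‖w - vm i‖^2 ≤ 4*κ*(t - qm i) := by
  classical
  have h4κ : (0:ℝ) < 4*κ := by positivity
  set c₁ : n → ℝ := fun j => qm j with hc₁
  set c₂ : n → ℝ := fun i => -qp i with hc₂
  set Φ : H → ℝ := fun w =>
    (Finset.univ.sup' Finset.univ_nonempty (fun j => c₁ j + ‖w - vm j‖^2/(4*κ))) +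
    (Finset.univ.sup' Finset.univ_nonempty (fun i => c₂ i + ‖w - vp i‖^2/(4*κ))) with hΦ
  have hΦcont : Continuous Φ := by
    apply Continuous.add
    · apply continuous_sup'
      intro j
      exact continuous_para (κ := κ) (c₁ j) (vm j)
    · apply continuous_sup'
      intro i
      exact continuous_para (κ := κ) (c₂ i) (vp i)
  -- coercivity and existence of a global minimizer
  obtain ⟨j₀⟩ := (inferInstance : Nonempty n)
  set w₀ : H := vm j₀ with hw₀
  have hlow : ∀ w : H, c₁ j₀ + c₂ j₀ + ‖w - vm j₀‖^2/(4*κ) ≤ Φ w := by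
    intro w
    have h1 : c₁ j₀ + ‖w - vm j₀‖^2/(4*κ) ≤
        Finset.univ.sup' Finset.univ_nonempty (fun j => c₁ j + ‖w - vm j‖^2/(4*κ)) :=
      Finset.le_sup' (fun j => c₁ j + ‖w - vm j‖^2/(4*κ)) (Finset.mem_univ j₀)
    have h2 : c₂ j₀ + ‖w - vp j₀‖^2/(4*κ) ≤
        Finset.univ.sup' Finset.univ_nonempty (fun i => c₂ i + ‖w - vp i‖^2/(4*κ)) :=
      Finset.le_sup' (fun i => c₂ i + ‖w - vp i‖^2/(4*κ)) (Finset.mem_univ j₀)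
    have h3 : (0:ℝ) ≤ ‖w - vp j₀‖^2/(4*κ) := by positivity
    rw [hΦ]
    dsimp only
    linarith
  set C : ℝ := Φ w₀ - (c₁ j₀ + c₂ j₀) with hC
  have hC0 : 0 ≤ C := by
    have h := hlow w₀
    rw [hw₀] at h
    simp only [sub_self, norm_zero] at h
    norm_num at h
    rw [hC, hw₀]
    linarith
  set R : ℝ := Real.sqrt (4*κ*C) + 1 with hR
  have hR1 : 1 ≤ R := by
    rw [hR]; nlinarith [Real.sqrt_nonneg (4*κ*C)]
  clear_value C R
  obtain ⟨wm, hwmem, hwmin⟩ := (isCompact_closedBall w₀ R).exists_isMinOn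
    ⟨w₀, Metric.mem_closedBall_self (by linarith)⟩ hΦcont.continuousOn
  have hmin : ∀ w, Φ wm ≤ Φ w := by
    intro w
    by_cases hw : w ∈ Metric.closedBall w₀ R
    · exact hwmin hw
    · have hout : R < ‖w - w₀‖ := by
        rw [Metric.mem_closedBall, dist_eq_norm, not_le] at hw
        exact hw
      have hsq : 4*κ*C < ‖w - w₀‖^2 := by
        nlinarith [Real.sq_sqrt (show (0:ℝ) ≤ 4*κ*C by positivity),
          Real.sqrt_nonneg (4*κ*C), norm_nonneg (w - w₀)]
      have h1 : C < ‖w - w₀‖^2/(4*κ) := by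
        rw [lt_div_iff₀ h4κ]
        nlinarith
      have h2 := hlow w
      have h3 : Φ wm ≤ Φ w₀ := hwmin (Metric.mem_closedBall_self (by linarith))
      rw [hw₀] at h1
      clear_value Φ c₁ c₂ w₀
      linarith [h1, h2, h3, hC.le, hC.ge]
  -- weights at the minimizer
  obtain ⟨μ, ν, hμ0, hν0, hμ1, hν1, hμact, hνact, hsum⟩ :=
    minimizer_weights hκ vm vp c₁ c₂ wm (fun w => hmin w)
  -- the value of Φ at the minimizer is ≤ 0
  set S₁ : ℝ := Finset.univ.sup' Finset.univ_nonempty (fun j => c₁ j + ‖wm - vm j‖^2/(4*κ))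
    with hS₁
  set S₂ : ℝ := Finset.univ.sup' Finset.univ_nonempty (fun i => c₂ i + ‖wm - vp i‖^2/(4*κ))
    with hS₂
  have hΦval : Φ wm = S₁ + S₂ := rfl
  have hfinal : S₁ + S₂ ≤ 0 := by
    -- S₁ = ∑ μ j * (...), S₂ = ∑ ν i * (...)
    have e₁ : S₁ = ∑ j, μ j * (c₁ j + ‖wm - vm j‖^2/(4*κ)) := by
      have : S₁ = ∑ j, μ j * S₁ := by
        rw [← Finset.sum_mul, hμ1, one_mul]
      rw [this]
      refine Finset.sum_congr rfl fun j _ => ?_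
      rcases eq_or_ne (μ j) 0 with h | h
      · rw [h, zero_mul, zero_mul]
      · rw [hμact j h]
    have e₂ : S₂ = ∑ i, ν i * (c₂ i + ‖wm - vp i‖^2/(4*κ)) := by
      have : S₂ = ∑ i, ν i * S₂ := by
        rw [← Finset.sum_mul, hν1, one_mul]
      rw [this]
      refine Finset.sum_congr rfl fun i _ => ?_
      rcases eq_or_ne (ν i) 0 with h | h
      · rw [h, zero_mul, zero_mul]
      · rw [hνact i h]
    -- rewrite as a double sum with product weights
    have hx : ∀ j, ∑ i, μ j * ν i *
        ((c₁ j + ‖wm - vm j‖^2/(4*κ)) + (c₂ i + ‖wm - vp i‖^2/(4*κ)))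
        = μ j * (c₁ j + ‖wm - vm j‖^2/(4*κ))
          + μ j * (∑ i, ν i * (c₂ i + ‖wm - vp i‖^2/(4*κ))) := by
      intro j
      calc ∑ i, μ j * ν i *
            ((c₁ j + ‖wm - vm j‖^2/(4*κ)) + (c₂ i + ‖wm - vp i‖^2/(4*κ)))
          = ∑ i, (μ j * (c₁ j + ‖wm - vm j‖^2/(4*κ)) * ν i
              + μ j * (ν i * (c₂ i + ‖wm - vp i‖^2/(4*κ)))) :=
            Finset.sum_congr rfl fun i _ => by ring
        _ = μ j * (c₁ j + ‖wm - vm j‖^2/(4*κ)) * (∑ i, ν i)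
              + μ j * (∑ i, ν i * (c₂ i + ‖wm - vp i‖^2/(4*κ))) := by
            rw [Finset.sum_add_distrib, ← Finset.mul_sum, ← Finset.mul_sum]
        _ = μ j * (c₁ j + ‖wm - vm j‖^2/(4*κ))
              + μ j * (∑ i, ν i * (c₂ i + ‖wm - vp i‖^2/(4*κ))) := by
            rw [hν1, mul_one]
    have e₃ : S₁ + S₂ = ∑ j, ∑ i, μ j * ν i *
        ((c₁ j + ‖wm - vm j‖^2/(4*κ)) + (c₂ i + ‖wm - vp i‖^2/(4*κ))) := by
      calc S₁ + S₂ = ∑ j, μ j * (c₁ j + ‖wm - vm j‖^2/(4*κ))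
            + ∑ i, ν i * (c₂ i + ‖wm - vp i‖^2/(4*κ)) := by rw [← e₁, ← e₂]
        _ = ∑ j, (μ j * (c₁ j + ‖wm - vm j‖^2/(4*κ))
              + μ j * (∑ i, ν i * (c₂ i + ‖wm - vp i‖^2/(4*κ)))) := by
            rw [Finset.sum_add_distrib, ← Finset.sum_mul, hμ1, one_mul]
        _ = ∑ j, ∑ i, μ j * ν i *
            ((c₁ j + ‖wm - vm j‖^2/(4*κ)) + (c₂ i + ‖wm - vp i‖^2/(4*κ))) :=
            Finset.sum_congr rfl fun j _ => (hx j).symm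
    -- per-term bound using the pairing hypothesis
    have hterm : ∀ j i, μ j * ν i *
        ((c₁ j + ‖wm - vm j‖^2/(4*κ)) + (c₂ i + ‖wm - vp i‖^2/(4*κ)))
        ≤ μ j * ν i * (⟪wm - vp i, wm - vm j⟫ * (2/(4*κ))) := by
      intro j i
      apply mul_le_mul_of_nonneg_left ?_ (mul_nonneg (hμ0 j) (hν0 i))
      have hp := hpair i j
      have hp' : qm j - qp i ≤ -(‖vp i - vm j‖^2/(4*κ)) := by
        have h := (div_le_iff₀ h4κ).2 (by linarith [hp] : ‖vp i - vm j‖^2 ≤ (qp i - qm j)*(4*κ))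
        linarith
      have hinner : ‖wm - vm j‖^2 + ‖wm - vp i‖^2 - ‖vp i - vm j‖^2
          = 2*⟪wm - vp i, wm - vm j⟫ := by
        have key : ∀ A B : H, ‖A‖^2 + ‖B‖^2 - ‖A - B‖^2 = 2*⟪B, A⟫ := by
          intro A B
          rw [norm_sub_sq_real, real_inner_comm A B]
          ring
        have hd : vp i - vm j = (wm - vm j) - (wm - vp i) := by abel
        rw [hd]
        exact key _ _
      have hsplit : (‖wm - vm j‖^2 + ‖wm - vp i‖^2 - ‖vp i - vm j‖^2)/(4*κ)
          = ‖wm - vm j‖^2/(4*κ) + ‖wm - vp i‖^2/(4*κ) - ‖vp i - vm j‖^2/(4*κ) := by ring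
      have hfin : ⟪wm - vp i, wm - vm j⟫ * (2/(4*κ))
          = ‖wm - vm j‖^2/(4*κ) + ‖wm - vp i‖^2/(4*κ) - ‖vp i - vm j‖^2/(4*κ) := by
        rw [← hsplit, hinner]
        ring
      rw [hfin, hc₁, hc₂]
      dsimp only
      linarith
    -- summing up
    have hsum2 : (∑ j, ∑ i, μ j * ν i * ⟪wm - vp i, wm - vm j⟫) * (2/(4*κ))
        = ∑ j, ∑ i, μ j * ν i * (⟪wm - vp i, wm - vm j⟫ * (2/(4*κ))) := by
      rw [Finset.sum_mul]
      refine Finset.sum_congr rfl fun j _ => ?_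
      rw [Finset.sum_mul]
      exact Finset.sum_congr rfl fun i _ => by ring
    have hVp : ∑ i, ν i • (wm - vp i) = wm - ∑ i, ν i • vp i := by
      simp only [smul_sub]
      rw [Finset.sum_sub_distrib, ← Finset.sum_smul, hν1, one_smul]
    have hVm : ∑ j, μ j • (wm - vm j) = wm - ∑ j, μ j • vm j := by
      simp only [smul_sub]
      rw [Finset.sum_sub_distrib, ← Finset.sum_smul, hμ1, one_smul]
    have hinner_sum : ∑ j, ∑ i, μ j * ν i * ⟪wm - vp i, wm - vm j⟫
        = ⟪wm - ∑ i, ν i • vp i, wm - ∑ j, μ j • vm j⟫ := by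
      calc ∑ j, ∑ i, μ j * ν i * ⟪wm - vp i, wm - vm j⟫
          = ∑ j, ⟪∑ i, ν i • (wm - vp i), μ j • (wm - vm j)⟫ := by
            refine Finset.sum_congr rfl fun j _ => ?_
            rw [sum_inner]
            refine Finset.sum_congr rfl fun i _ => ?_
            rw [real_inner_smul_left, real_inner_smul_right]
            ring
        _ = ⟪∑ i, ν i • (wm - vp i), ∑ j, μ j • (wm - vm j)⟫ := (inner_sum _ _ _).symm
        _ = ⟪wm - ∑ i, ν i • vp i, wm - ∑ j, μ j • vm j⟫ := by rw [hVp, hVm]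
    have hopp : wm - ∑ i, ν i • vp i = -(wm - ∑ j, μ j • vm j) := by
      have h2 : ∑ i, ν i • vp i = (2:ℝ) • wm - ∑ j, μ j • vm j := eq_sub_of_add_eq' hsum
      rw [h2, two_smul]
      abel
    have hneg : ⟪wm - ∑ i, ν i • vp i, wm - ∑ j, μ j • vm j⟫ ≤ 0 := by
      rw [hopp, inner_neg_left, real_inner_self_eq_norm_sq]
      simp [sq_nonneg]
    have hchain : S₁ + S₂ ≤ (∑ j, ∑ i, μ j * ν i * ⟪wm - vp i, wm - vm j⟫) * (2/(4*κ)) := by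
      rw [e₃, hsum2]
      exact Finset.sum_le_sum fun j _ => Finset.sum_le_sum fun i _ => hterm j i
    rw [hinner_sum] at hchain
    have h2κ : (0:ℝ) ≤ 2/(4*κ) := by positivity
    nlinarith [hchain, hneg, h2κ]
  -- conclusion
  refine ⟨wm, S₁, fun i => ⟨?_, ?_⟩⟩
  · have h1 : c₂ i + ‖wm - vp i‖^2/(4*κ) ≤ S₂ := by
      rw [hS₂]
      exact Finset.le_sup' (fun i' => c₂ i' + ‖wm - vp i'‖^2/(4*κ)) (Finset.mem_univ i)
    rw [hc₂] at h1
    dsimp only at h1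
    have h2 : ‖wm - vp i‖^2/(4*κ) ≤ qp i - S₁ := by linarith
    have h3 := mul_le_mul_of_nonneg_right h2 h4κ.le
    rw [div_mul_cancel₀ _ (ne_of_gt h4κ)] at h3
    linarith [h3]
  · have h1 : c₁ i + ‖wm - vm i‖^2/(4*κ) ≤ S₁ := by
      rw [hS₁]
      exact Finset.le_sup' (fun j' => c₁ j' + ‖wm - vm j'‖^2/(4*κ)) (Finset.mem_univ i)
    rw [hc₁] at h1
    dsimp only at h1
    have h2 : ‖wm - vm i‖^2/(4*κ) ≤ S₁ - qm i := by linarith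
    have h3 := mul_le_mul_of_nonneg_right h2 h4κ.le
    rw [div_mul_cancel₀ _ (ne_of_gt h4κ)] at h3
    linarith [h3]


lemma core_point [FiniteDimensional ℝ H] {κ : ℝ} (hκ : 0 < κ) (D : Set H) (hD : D.Nonempty)
    (F : H → ℝ) (G : H → H) (hPC : ∀ a ∈ D, ∀ b ∈ D, PC κ a b (F a) (F b) (G a) (G b))
    (z : H) : ∃ t w, ∀ a ∈ D, PC κ z a t (F a) w (G a) := by
  classical
  set K : D → Set (H × ℝ) := fun a => {p : H × ℝ |
    ‖p.1 - VP κ z a (G a)‖^2 ≤ 4*κ*(QP κ z a (F a) (G a) - p.2) ∧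
    ‖p.1 - VM κ z a (G a)‖^2 ≤ 4*κ*(p.2 - QM κ z a (F a) (G a))} with hK
  have hclosed : ∀ a : D, IsClosed (K a) := by
    intro a
    apply IsClosed.inter
    · exact isClosed_le
        (show Continuous fun p : H × ℝ => ‖p.1 - VP κ z a (G a)‖^2 by fun_prop)
        (show Continuous fun p : H × ℝ => 4*κ*(QP κ z a (F a) (G a) - p.2) by fun_prop)
    · exact isClosed_le
        (show Continuous fun p : H × ℝ => ‖p.1 - VM κ z a (G a)‖^2 by fun_prop)
        (show Continuous fun p : H × ℝ => 4*κ*(p.2 - QM κ z a (F a) (G a)) by fun_prop)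
  have hbound : ∀ a : D, K a ⊆ (Metric.closedBall (VP κ z a (G a))
      (Real.sqrt (4*κ*(QP κ z a (F a) (G a) - QM κ z a (F a) (G a))))) ×ˢ
      (Set.Icc (QM κ z a (F a) (G a)) (QP κ z a (F a) (G a))) := by
    intro a p hp
    obtain ⟨h1, h2⟩ := hp
    have ht1 : QM κ z a (F a) (G a) ≤ p.2 := by nlinarith [sq_nonneg ‖p.1 - VM κ z a (G a)‖]
    have ht2 : p.2 ≤ QP κ z a (F a) (G a) := by nlinarith [sq_nonneg ‖p.1 - VP κ z a (G a)‖]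
    constructor
    · rw [Metric.mem_closedBall, dist_eq_norm]
      have hle : ‖p.1 - VP κ z a (G a)‖^2 ≤ 4*κ*(QP κ z a (F a) (G a) - QM κ z a (F a) (G a)) := by
        nlinarith
      have := Real.sqrt_le_sqrt hle
      rwa [Real.sqrt_sq (norm_nonneg _)] at this
    · exact ⟨ht1, ht2⟩
  have hcompact : ∀ a : D, IsCompact (K a) := fun a =>
    ((isCompact_closedBall _ _).prod isCompact_Icc).of_isClosed_subset (hclosed a) (hbound a)
  -- pairwise inequalities on D give the finite intersection property
  have hpairD : ∀ a b : D, ‖VP κ z a (G a) - VM κ z b (G b)‖^2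
      ≤ 4*κ*(QP κ z a (F a) (G a) - QM κ z b (F b) (G b)) := by
    intro a b
    exact pc_to_ball hκ.le (hPC a a.2 b b.2) z
  obtain ⟨a₀, ha₀⟩ := hD
  set a₀' : D := ⟨a₀, ha₀⟩ with ha₀'
  have hFIP : (K a₀' ∩ ⋂ a : D, K a).Nonempty := by
    by_contra hempty
    rw [Set.not_nonempty_iff_eq_empty] at hempty
    obtain ⟨u, hu⟩ := (hcompact a₀').elim_finite_subfamily_closed K hclosed hempty
    -- apply the finite lemma to the index set insert a₀' u
    set v : Finset D := insert a₀' u with hv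
    have : Nonempty ↥v := ⟨⟨a₀', Finset.mem_insert_self _ _⟩⟩
    obtain ⟨w, t, hwt⟩ := core_finite (H := H) hκ (n := ↥v)
      (fun i => VP κ z i.1 (G i.1)) (fun i => VM κ z i.1 (G i.1))
      (fun i => QP κ z i.1 (F i.1) (G i.1)) (fun i => QM κ z i.1 (F i.1) (G i.1))
      (fun i j => hpairD i.1 j.1)
    have hmem : ∀ i : ↥v, (w, t) ∈ K i.1 := by
      intro i
      exact ⟨(hwt i).1, (hwt i).2⟩
    have : (w, t) ∈ K a₀' ∩ ⋂ i ∈ u, K i := by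
      refine ⟨hmem ⟨a₀', Finset.mem_insert_self _ _⟩, ?_⟩
      rw [Set.mem_iInter₂]
      intro i hi
      exact hmem ⟨i, Finset.mem_insert_of_mem hi⟩
    rw [hu] at this
    exact this
  obtain ⟨p, -, hpall⟩ := hFIP
  refine ⟨p.2, p.1, fun a ha => ?_⟩
  have hmem : p ∈ K ⟨a, ha⟩ := by
    rw [Set.mem_iInter] at hpall
    exact hpall ⟨a, ha⟩
  exact ball_to_pc hκ hmem.1 hmem.2


lemma total_field [FiniteDimensional ℝ H] {κ : ℝ} (hκ : 0 < κ) (E : Set H) (hEne : E.Nonempty)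
    (f : H → ℝ) (g : H → H) (hE : ∀ x ∈ E, ∀ y ∈ E, PC κ x y (f x) (f y) (g x) (g y)) :
    ∃ (Fm : H → ℝ) (Gm : H → H), (∀ x y, PC κ x y (Fm x) (Fm y) (Gm x) (Gm y)) ∧
      ∀ x ∈ E, Fm x = f x ∧ Gm x = g x := by
  classical
  set base : Set (H × ℝ × H) := (fun x => (x, f x, g x)) '' E with hbasedef
  set S : Set (Set (H × ℝ × H)) := {G' | base ⊆ G' ∧ (∀ p ∈ G', ∀ q ∈ G', p.1 = q.1 → p = q) ∧
      ∀ p ∈ G', ∀ q ∈ G', PC κ p.1 q.1 p.2.1 q.2.1 p.2.2 q.2.2} with hSdef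
  have hbase : base ∈ S := by
    refine ⟨subset_rfl, ?_, ?_⟩
    · rintro p ⟨x, hx, rfl⟩ q ⟨y, hy, rfl⟩ h
      simp only at h
      subst h
      rfl
    · rintro p ⟨x, hx, rfl⟩ q ⟨y, hy, rfl⟩
      exact hE x hx y hy
  have hchain : ∀ c ⊆ S, IsChain (· ⊆ ·) c → c.Nonempty → ∃ ub ∈ S, ∀ s ∈ c, s ⊆ ub := by
    rintro c hcS hc ⟨c₀, hc₀⟩
    refine ⟨⋃₀ c, ⟨(hcS hc₀).1.trans (Set.subset_sUnion_of_mem hc₀), ?_, ?_⟩,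
      fun s hs => Set.subset_sUnion_of_mem hs⟩
    · rintro p ⟨G₁, hG₁, hp⟩ q ⟨G₂, hG₂, hq⟩ h
      rcases hc.total hG₁ hG₂ with hle | hle
      · exact (hcS hG₂).2.1 p (hle hp) q hq h
      · exact (hcS hG₁).2.1 p hp q (hle hq) h
    · rintro p ⟨G₁, hG₁, hp⟩ q ⟨G₂, hG₂, hq⟩
      rcases hc.total hG₁ hG₂ with hle | hle
      · exact (hcS hG₂).2.2 p (hle hp) q hq
      · exact (hcS hG₁).2.2 p hp q (hle hq)
  obtain ⟨M, hbaseM, hMmax⟩ := zorn_subset_nonempty S hchain base hbase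
  have hMS := hMmax.prop
  have htot : ∀ z : H, ∃ p ∈ M, p.1 = z := by
    intro z
    by_contra hz
    push_neg at hz
    set D : Set H := Prod.fst '' M with hDdef
    have hDne : D.Nonempty := by
      obtain ⟨x, hx⟩ := hEne
      exact ⟨x, (x, f x, g x), hbaseM ⟨x, hx, rfl⟩, rfl⟩
    set P : H → H × ℝ × H := fun a => if h : ∃ p ∈ M, p.1 = a then h.choose else (a, 0, 0)
      with hP
    have hPmem : ∀ a ∈ D, P a ∈ M ∧ (P a).1 = a := by
      rintro a ⟨p, hp, rfl⟩
      have hex : ∃ q ∈ M, q.1 = p.1 := ⟨p, hp, rfl⟩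
      rw [hP]
      simp only [dif_pos hex]
      exact hex.choose_spec
    have hPCD : ∀ a ∈ D, ∀ b ∈ D, PC κ a b ((P a).2.1) ((P b).2.1) ((P a).2.2) ((P b).2.2) := by
      intro a ha b hb
      have h1 := hPmem a ha
      have h2 := hPmem b hb
      have h3 := hMS.2.2 (P a) h1.1 (P b) h2.1
      rwa [h1.2, h2.2] at h3
    obtain ⟨t, w, htw⟩ := core_point hκ D hDne (fun a => (P a).2.1) (fun a => (P a).2.2) hPCD z
    have hM'S : insert (z, t, w) M ∈ S := by
      refine ⟨hbaseM.trans (Set.subset_insert _ _), ?_, ?_⟩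
      · intro p hp q hq h
        rcases Set.mem_insert_iff.1 hp with rfl | hp' <;>
          rcases Set.mem_insert_iff.1 hq with rfl | hq'
        · rfl
        · exact absurd h.symm (hz q hq')
        · exact absurd h (hz p hp')
        · exact hMS.2.1 p hp' q hq' h
      · intro p hp q hq
        rcases Set.mem_insert_iff.1 hp with rfl | hp' <;>
          rcases Set.mem_insert_iff.1 hq with rfl | hq'
        · exact PC_self κ z t w
        · have hq1 : q.1 ∈ D := ⟨q, hq', rfl⟩
          have hPq := hPmem q.1 hq1
          have hqq : P q.1 = q := hMS.2.1 _ hPq.1 q hq' hPq.2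
          have h4 := htw q.1 hq1
          rwa [hqq] at h4
        · have hp1 : p.1 ∈ D := ⟨p, hp', rfl⟩
          have hPp := hPmem p.1 hp1
          have hpp : P p.1 = p := hMS.2.1 _ hPp.1 p hp' hPp.2
          have h4 := htw p.1 hp1
          rw [hpp] at h4
          exact PC_symm h4
        · exact hMS.2.2 p hp' q hq'
    have hsub : insert (z, t, w) M ⊆ M := hMmax.2 hM'S (Set.subset_insert _ _)
    exact hz _ (hsub (Set.mem_insert _ _)) rfl
  choose Q hQM hQ1 using htot
  refine ⟨fun a => (Q a).2.1, fun a => (Q a).2.2, ?_, ?_⟩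
  · intro x y
    have h3 := hMS.2.2 (Q x) (hQM x) (Q y) (hQM y)
    rwa [hQ1 x, hQ1 y] at h3
  · intro x hx
    have hbx : (x, f x, g x) ∈ M := hbaseM ⟨x, hx, rfl⟩
    have hq : Q x = (x, f x, g x) := hMS.2.1 _ (hQM x) _ hbx (by rw [hQ1 x])
    show (Q x).2.1 = f x ∧ (Q x).2.2 = g x
    rw [hq]
    exact ⟨rfl, rfl⟩


lemma interp [FiniteDimensional ℝ H] {κ : ℝ} (hκ : 0 < κ) (Fm : H → ℝ) (Gm : H → H)
    (hPC : ∀ x y, PC κ x y (Fm x) (Fm y) (Gm x) (Gm y)) :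
    (∀ x, HasGradientAt Fm (Gm x) x) ∧ LipschitzWith κ.toNNReal Gm := by
  have hB : ∀ x y, ‖Gm x - Gm y‖ ≤ κ * ‖x - y‖ := by
    intro x y
    have h := hPC x y
    unfold PC at h
    have h1 : ‖Gm x - Gm y‖^2 ≤ (κ*‖x - y‖)^2 := by
      nlinarith [abs_nonneg (SD x y (Fm x) (Fm y) (Gm x) (Gm y)), hκ]
    have h2 : (0:ℝ) ≤ κ*‖x-y‖ := by positivity
    nlinarith [norm_nonneg (Gm x - Gm y)]
  have hA : ∀ x y, |Fm y - Fm x - ⟪Gm x, y - x⟫| ≤ κ * ‖y - x‖^2 := by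
    intro x y
    have h := hPC x y
    unfold PC at h
    set Sv := SD x y (Fm x) (Fm y) (Gm x) (Gm y) with hSv
    have hS : |Sv| ≤ κ*‖x-y‖^2/2 := by
      nlinarith [sq_nonneg ‖Gm x - Gm y‖, abs_nonneg Sv, hκ]
    have hinner : |⟪Gm x - Gm y, x - y⟫| ≤ κ * ‖x-y‖^2 := by
      calc |⟪Gm x - Gm y, x - y⟫| ≤ ‖Gm x - Gm y‖ * ‖x - y‖ := abs_real_inner_le_norm _ _
        _ ≤ (κ*‖x-y‖) * ‖x-y‖ := mul_le_mul_of_nonneg_right (hB x y) (norm_nonneg _)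
        _ = κ*‖x-y‖^2 := by ring
    have hexp : Fm y - Fm x - ⟪Gm x, y - x⟫ = -(Sv/2) + ⟪Gm x - Gm y, x - y⟫/2 := by
      have e1 : ⟪Gm x, y - x⟫ = -⟪Gm x, x - y⟫ := by
        rw [← inner_neg_right]
        congr 1
        abel
      rw [e1, hSv]
      unfold SD
      rw [inner_add_left, inner_sub_left]
      ring
    rw [hexp, norm_sub_rev y x]
    have habs : |(-(Sv/2) + ⟪Gm x - Gm y, x - y⟫/2)| ≤ |Sv|/2 + |⟪Gm x - Gm y, x - y⟫|/2 := by
      calc |(-(Sv/2) + ⟪Gm x - Gm y, x - y⟫/2)|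
          ≤ |(-(Sv/2))| + |⟪Gm x - Gm y, x - y⟫/2| := abs_add_le _ _
        _ = |Sv|/2 + |⟪Gm x - Gm y, x - y⟫|/2 := by
            rw [abs_neg, abs_div, abs_div]
            norm_num
    have hpos : (0:ℝ) ≤ κ*‖x-y‖^2 := by positivity
    linarith [hS, hinner, habs]
  constructor
  · intro x
    rw [hasGradientAt_iff_hasFDerivAt, hasFDerivAt_iff_isLittleO,
      Asymptotics.isLittleO_iff]
    intro c hc
    have hball : Metric.ball x (c/κ) ∈ 𝓝 x := Metric.ball_mem_nhds x (by positivity)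
    filter_upwards [hball] with y hy
    rw [Metric.mem_ball, dist_eq_norm] at hy
    have h1 := hA x y
    rw [InnerProductSpace.toDual_apply_apply, Real.norm_eq_abs]
    calc |Fm y - Fm x - ⟪Gm x, y - x⟫| ≤ κ*‖y-x‖^2 := h1
      _ = (κ*‖y-x‖)*‖y-x‖ := by ring
      _ ≤ c*‖y-x‖ := by
          apply mul_le_mul_of_nonneg_right ?_ (norm_nonneg _)
          rw [lt_div_iff₀ hκ] at hy
          nlinarith [hy]
  · apply LipschitzWith.of_dist_le_mul
    intro x y
    rw [dist_eq_norm, dist_eq_norm, Real.coe_toNNReal _ hκ.le]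
    exact hB x y

end Wells

/-- Wells' theorem: there is an interpolant `F` of the 1-field with
`Lip(∇F) ≤ Γ(P_E)`. -/
theorem statement2 {d : ℕ} (hd : 1 ≤ d) (E : Set (EuclideanSpace ℝ (Fin d)))
    (hE : E.Finite) (h2 : ∃ x ∈ E, ∃ y ∈ E, x ≠ y)
    (f : EuclideanSpace ℝ (Fin d) → ℝ)
    (g : EuclideanSpace ℝ (Fin d) → EuclideanSpace ℝ (Fin d)) :
    ∃ F : EuclideanSpace ℝ (Fin d) → ℝ, Differentiable ℝ F ∧
      LipschitzWith (Gamma E f g).toNNReal (gradient F) ∧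
      ∀ x ∈ E, F x = f x ∧ gradient F x = g x := by
  classical
  set κ : ℝ := Gamma E f g with hκdef
  set Sset : Set ℝ := {t : ℝ | ∃ x ∈ E, ∃ y ∈ E, x ≠ y ∧
    t = Real.sqrt (funA f g x y ^ 2 + funB g x y ^ 2) + funA f g x y} with hSset
  have hκS : κ = sSup Sset := rfl
  have hSfin : Sset.Finite := by
    have hsub : Sset ⊆ (fun p : EuclideanSpace ℝ (Fin d) × EuclideanSpace ℝ (Fin d) =>
        Real.sqrt (funA f g p.1 p.2 ^ 2 + funB g p.1 p.2 ^ 2) + funA f g p.1 p.2) ''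
        (E ×ˢ E) := by
      rintro t ⟨x, hx, y, hy, hxy, rfl⟩
      exact ⟨(x, y), ⟨hx, hy⟩, rfl⟩
    exact ((hE.prod hE).image _).subset hsub
  have hSbdd : BddAbove Sset := hSfin.bddAbove
  have hmemS : ∀ x ∈ E, ∀ y ∈ E, x ≠ y →
      Real.sqrt (funA f g x y ^ 2 + funB g x y ^ 2) + funA f g x y ≤ κ := by
    intro x hx y hy hxy
    rw [hκS]
    exact le_csSup hSbdd ⟨x, hx, y, hy, hxy, rfl⟩
  have hfunA0 : ∀ x y, 0 ≤ funA f g x y := fun x y => div_nonneg (abs_nonneg _) (sq_nonneg _)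
  have hfunB0 : ∀ x y, 0 ≤ funB g x y := fun x y => div_nonneg (norm_nonneg _) (norm_nonneg _)
  have hκ0 : 0 ≤ κ := by
    obtain ⟨x, hx, y, hy, hxy⟩ := h2
    have h := hmemS x hx y hy hxy
    have h2' := Real.sqrt_nonneg (funA f g x y ^ 2 + funB g x y ^ 2)
    linarith [hfunA0 x y]
  have hjet : ∀ x y : EuclideanSpace ℝ (Fin d),
      jet f g x x - jet f g y x + jet f g x y - jet f g y y
        = Wells.SD x y (f x) (f y) (g x) (g y) := by
    intro x y
    simp only [jet, Wells.SD, sub_self, inner_zero_right]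
    rw [inner_add_left]
    have e1 : ⟪g x, y - x⟫ = -⟪g x, x - y⟫ := by
      rw [← inner_neg_right]
      congr 1
      abel
    rw [e1]
    ring
  have hPCE : ∀ x ∈ E, ∀ y ∈ E, Wells.PC κ x y (f x) (f y) (g x) (g y) := by
    intro x hx y hy
    rcases eq_or_ne x y with rfl | hxy
    · exact Wells.PC_self κ x (f x) (g x)
    · have hb := hmemS x hx y hy hxy
      have hn : (0:ℝ) < ‖x - y‖ := by
        rw [norm_pos_iff, sub_ne_zero]
        exact hxy
      have hA : funA f g x y = |Wells.SD x y (f x) (f y) (g x) (g y)| / ‖x - y‖^2 := by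
        rw [funA, hjet]
      have hBv : funB g x y = ‖g x - g y‖ / ‖x - y‖ := rfl
      have h1 : Real.sqrt (funA f g x y ^2 + funB g x y ^2) ≤ κ - funA f g x y := by linarith
      have h2v : funA f g x y ^2 + funB g x y^2 ≤ (κ - funA f g x y)^2 := by
        have hq := Real.sq_sqrt (by positivity : (0:ℝ) ≤ funA f g x y ^2 + funB g x y^2)
        nlinarith [Real.sqrt_nonneg (funA f g x y ^2 + funB g x y ^2), h1]
      have h3 : funB g x y^2 + 2*κ*funA f g x y ≤ κ^2 := by nlinarith [h2v]
      unfold Wells.PC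
      have e2 : funA f g x y * ‖x - y‖^2 = |Wells.SD x y (f x) (f y) (g x) (g y)| := by
        rw [hA]
        field_simp
      have e3 : funB g x y^2 * ‖x - y‖^2 = ‖g x - g y‖^2 := by
        rw [hBv]
        field_simp
      nlinarith [mul_le_mul_of_nonneg_right h3 (sq_nonneg ‖x - y‖), e2, e3, sq_nonneg ‖x - y‖]
  rcases eq_or_lt_of_le hκ0 with hκz | hκpos
  · -- degenerate case : Γ = 0, the field is affine
    obtain ⟨x₀, hx₀, y₀, hy₀, hxy₀⟩ := h2
    have hdeg : ∀ x ∈ E, g x = g x₀ ∧ f x = f x₀ + ⟪g x₀, x - x₀⟫ := by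
      intro x hx
      rcases eq_or_ne x x₀ with rfl | hne
      · exact ⟨rfl, by simp⟩
      · have hb := hmemS x hx x₀ hx₀ hne
        rw [← hκz] at hb
        have hA0 : funA f g x x₀ = 0 := by
          linarith [Real.sqrt_nonneg (funA f g x x₀ ^ 2 + funB g x x₀ ^ 2),
            hfunA0 x x₀]
        have hs0 : Real.sqrt (funA f g x x₀ ^ 2 + funB g x x₀ ^ 2) = 0 := by
          linarith [Real.sqrt_nonneg (funA f g x x₀ ^ 2 + funB g x x₀ ^ 2), hfunA0 x x₀]
        have hB0 : funB g x x₀ = 0 := by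
          have h4 := (Real.sqrt_eq_zero (by positivity)).1 hs0
          nlinarith [hfunB0 x x₀, sq_nonneg (funA f g x x₀), sq_nonneg (funB g x x₀)]
        have hn : (0:ℝ) < ‖x - x₀‖ := by
          rw [norm_pos_iff, sub_ne_zero]
          exact hne
        have hg : g x = g x₀ := by
          rw [funB, div_eq_zero_iff] at hB0
          rcases hB0 with h4 | h4
          · rwa [norm_eq_zero, sub_eq_zero] at h4
          · exact absurd h4 (ne_of_gt hn)
        refine ⟨hg, ?_⟩
        rw [funA, div_eq_zero_iff] at hA0
        rcases hA0 with h4 | h4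
        · rw [hjet] at h4
          rw [abs_eq_zero] at h4
          unfold Wells.SD at h4
          rw [hg, inner_add_left] at h4
          have : 2 * ⟪g x₀, x - x₀⟫ = 2*(f x - f x₀) := by
            rw [two_mul]
            linarith [h4]
          linarith [this]
        · exact absurd h4 (by positivity)
    have hgradall : ∀ z, HasGradientAt
        (fun z : EuclideanSpace ℝ (Fin d) => f x₀ + ⟪g x₀, z - x₀⟫) (g x₀) z := by
      intro z
      rw [hasGradientAt_iff_hasFDerivAt]
      have heq : (fun z : EuclideanSpace ℝ (Fin d) => f x₀ + ⟪g x₀, z - x₀⟫)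
          = fun z => (f x₀ - ⟪g x₀, x₀⟫) + (InnerProductSpace.toDual ℝ _ (g x₀)) z := by
        funext z
        rw [InnerProductSpace.toDual_apply_apply, inner_sub_right]
        ring
      rw [heq]
      exact ((InnerProductSpace.toDual ℝ _ (g x₀)).hasFDerivAt).const_add _
    have hgr : gradient (fun z : EuclideanSpace ℝ (Fin d) => f x₀ + ⟪g x₀, z - x₀⟫)
        = fun _ => g x₀ := funext fun z => (hgradall z).gradient
    refine ⟨fun z => f x₀ + ⟪g x₀, z - x₀⟫, fun z => (hgradall z).differentiableAt, ?_, ?_⟩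
    · rw [hgr]
      apply LipschitzWith.of_dist_le_mul
      intro a b
      rw [dist_self]
      positivity
    · intro x hx
      refine ⟨((hdeg x hx).2).symm, ?_⟩
      rw [hgr]
      exact ((hdeg x hx).1).symm
  · have hEne : E.Nonempty := by
      obtain ⟨x, hx, -⟩ := h2
      exact ⟨x, hx⟩
    obtain ⟨Fm, Gm, hPCall, hagree⟩ := Wells.total_field hκpos E hEne f g hPCE
    obtain ⟨hgrad, hlip⟩ := Wells.interp hκpos Fm Gm hPCall
    have hgr : gradient Fm = Gm := funext fun x => (hgrad x).gradient
    refine ⟨Fm, fun x => (hgrad x).differentiableAt, ?_, ?_⟩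
    · rw [hgr]
      exact hlip
    · intro x hx
      refine ⟨(hagree x hx).1, ?_⟩
      rw [hgr]
      exact (hagree x hx).2
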